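/- Let p_1,...,p_m be pairwise distinct, lying in the closed ball of radius r centered at 0 with 0 < r < 1, let q be in the open unit disk, and suppose d̂ = max_i |p_i - q| < 1. Then with c_i = 1/∏_{j≠i}(p_i - p_j), for every z on the unit circle, |∑_{i=1}^m c_i/(z - p_i) - 1/(z-q)^m| ≤ ((|q|+2)^m - (|q|+1)^m)/(d(q, ∂𝔻)^m (1-r)^m) · d̂, where d(q, ∂𝔻) = 1 - |q| is the distance from q to the unit circle. -/

import Mathlib

open Finset

/-- Telescoping bound for the difference of two products. -/
lemma tele_bound (n : ℕ) (f g : ℕ → ℂ) (A B d : ℝ) (hA : 0 ≤ A) (hB : 0 ≤ B) (hd : 0 ≤ d)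
    (hf : ∀ i < n, ‖f i‖ ≤ A) (hg : ∀ i < n, ‖g i‖ ≤ B)
    (hfg : ∀ i < n, ‖f i - g i‖ ≤ d) :
    ‖∏ i ∈ range n, f i - ∏ i ∈ range n, g i‖
      ≤ d * ∑ k ∈ range n, A ^ k * B ^ (n - 1 - k) := by
  induction n with
  | zero => simp
  | succ n ih =>
    have ih' := ih (fun i hi => hf i (by omega)) (fun i hi => hg i (by omega))
      (fun i hi => hfg i (by omega))
    have hSnn : (0:ℝ) ≤ ∑ k ∈ range n, A ^ k * B ^ (n - 1 - k) :=
      Finset.sum_nonneg fun k _ => mul_nonneg (pow_nonneg hA _) (pow_nonneg hB _)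
    have e : ∏ i ∈ range (n+1), f i - ∏ i ∈ range (n+1), g i
        = (∏ i ∈ range n, f i - ∏ i ∈ range n, g i) * f n
          + (∏ i ∈ range n, g i) * (f n - g n) := by
      rw [Finset.prod_range_succ, Finset.prod_range_succ]; ring
    have hgprod : ‖∏ i ∈ range n, g i‖ ≤ B ^ n := by
      rw [norm_prod]
      calc ∏ i ∈ range n, ‖g i‖ ≤ ∏ i ∈ range n, B :=
            Finset.prod_le_prod (fun i _ => (norm_nonneg _))
              (fun i hi => hg i (by have := Finset.mem_range.mp hi; omega))
        _ = B ^ n := by simp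
    have hS : ∑ k ∈ range (n+1), A ^ k * B ^ (n + 1 - 1 - k)
        = A * (∑ k ∈ range n, A ^ k * B ^ (n - 1 - k)) + B ^ n := by
      rw [Finset.sum_range_succ', Finset.mul_sum]
      congr 1
      · refine Finset.sum_congr rfl fun k hk => ?_
        have h1 : n + 1 - 1 - (k + 1) = n - 1 - k := by omega
        rw [h1, pow_succ]; ring
      · simp
    calc ‖∏ i ∈ range (n+1), f i - ∏ i ∈ range (n+1), g i‖
        ≤ ‖(∏ i ∈ range n, f i - ∏ i ∈ range n, g i) * f n‖
          + ‖(∏ i ∈ range n, g i) * (f n - g n)‖ := by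
          rw [e]; exact norm_add_le _ _
      _ ≤ (d * ∑ k ∈ range n, A ^ k * B ^ (n - 1 - k)) * A + B ^ n * d := by
          rw [norm_mul, norm_mul]
          gcongr
          · exact hf n (by omega)
          · exact hfg n (by omega)
      _ = d * ∑ k ∈ range (n+1), A ^ k * B ^ (n + 1 - 1 - k) := by rw [hS]; ring

/-- Partial fraction decomposition. -/
lemma partial_fractions (m : ℕ) (hm : 0 < m) (p : Fin m → ℂ) (hp : Function.Injective p)
    (z : ℂ) (hz : ∀ i, z - p i ≠ 0) :
    ∑ i, (∏ j ∈ Finset.univ.erase i, (p i - p j))⁻¹ / (z - p i)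
      = (∏ i, (z - p i))⁻¹ := by
  have : Nonempty (Fin m) := ⟨⟨0, hm⟩⟩
  have h1 := Lagrange.interpolate_one (s := Finset.univ) (v := p) hp.injOn
    Finset.univ_nonempty
  have key : ∑ i, ((∏ j ∈ Finset.univ.erase i, (p i - p j))⁻¹
      * ∏ j ∈ Finset.univ.erase i, (z - p j)) = 1 := by
    have h2 := congrArg (Polynomial.eval z) h1
    simp only [Lagrange.interpolate_apply, Lagrange.basis, Lagrange.basisDivisor,
      Polynomial.eval_finset_sum, Polynomial.eval_mul, Polynomial.eval_C,
      Polynomial.eval_prod, Polynomial.eval_sub, Polynomial.eval_X, Pi.one_apply,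
      Polynomial.eval_one, one_mul] at h2
    rw [← h2]
    refine Finset.sum_congr rfl fun i _ => ?_
    rw [Finset.prod_mul_distrib, Finset.prod_inv_distrib]
  have step : ∀ i : Fin m, (∏ j ∈ Finset.univ.erase i, (p i - p j))⁻¹ / (z - p i)
      = (∏ i, (z - p i))⁻¹ * ((∏ j ∈ Finset.univ.erase i, (p i - p j))⁻¹
        * ∏ j ∈ Finset.univ.erase i, (z - p j)) := by
    intro i
    have hPe : (∏ j, (z - p j)) = (z - p i) * ∏ j ∈ Finset.univ.erase i, (z - p j) :=
      (Finset.mul_prod_erase _ _ (Finset.mem_univ i)).symm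
    have hEne : (∏ j ∈ Finset.univ.erase i, (z - p j)) ≠ 0 :=
      Finset.prod_ne_zero_iff.mpr fun j _ => hz j
    rw [hPe, mul_inv, div_eq_mul_inv]
    have h2 : (∏ j ∈ Finset.univ.erase i, (z - p j))⁻¹ * (∏ j ∈ Finset.univ.erase i, (z - p j))
        = 1 := inv_mul_cancel₀ hEne
    calc (∏ j ∈ Finset.univ.erase i, (p i - p j))⁻¹ * (z - p i)⁻¹
        = ((∏ j ∈ Finset.univ.erase i, (z - p j))⁻¹ * (∏ j ∈ Finset.univ.erase i, (z - p j)))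
          * ((∏ j ∈ Finset.univ.erase i, (p i - p j))⁻¹ * (z - p i)⁻¹) := by
          rw [h2, one_mul]
      _ = (z - p i)⁻¹ * (∏ j ∈ Finset.univ.erase i, (z - p j))⁻¹
          * ((∏ j ∈ Finset.univ.erase i, (p i - p j))⁻¹ * ∏ j ∈ Finset.univ.erase i, (z - p j)) := by
          ring
  calc ∑ i, (∏ j ∈ Finset.univ.erase i, (p i - p j))⁻¹ / (z - p i)
      = ∑ i, (∏ i, (z - p i))⁻¹ * ((∏ j ∈ Finset.univ.erase i, (p i - p j))⁻¹
        * ∏ j ∈ Finset.univ.erase i, (z - p j)) := Finset.sum_congr rfl fun i _ => step i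
    _ = (∏ i, (z - p i))⁻¹ * ∑ i, ((∏ j ∈ Finset.univ.erase i, (p i - p j))⁻¹
        * ∏ j ∈ Finset.univ.erase i, (z - p j)) := by rw [Finset.mul_sum]
    _ = (∏ i, (z - p i))⁻¹ := by rw [key, mul_one]

/-- SISO simple pole approximation error bound on the unit circle. -/
theorem siso_simple_pole_approx (m : ℕ) (hm : 0 < m) (r : ℝ) (hr0 : 0 < r) (hr1 : r < 1)
    (p : Fin m → ℂ) (hp : Function.Injective p)
    (hpr : ∀ i, ‖p i‖ ≤ r)
    (q : ℂ) (hq : ‖q‖ < 1) (d : ℝ)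
    (hd : IsGreatest (Set.range fun i => ‖p i - q‖) d) (hd1 : d < 1)
    (z : ℂ) (hz : ‖z‖ = 1) :
    ‖∑ i, (∏ j ∈ Finset.univ.erase i, (p i - p j))⁻¹ / (z - p i)
        - 1 / (z - q) ^ m‖
      ≤ ((‖q‖ + 2) ^ m - (‖q‖ + 1) ^ m)
          / ((1 - ‖q‖) ^ m * (1 - r) ^ m) * d := by
  set A : ℝ := ‖q‖ + 1 with hA
  set B : ℝ := ‖q‖ + 2 with hB
  have hq0 : 0 ≤ ‖q‖ := norm_nonneg q
  have hd0 : 0 ≤ d := by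
    obtain ⟨i, hi⟩ := hd.1
    rw [← hi]; exact norm_nonneg _
  have hzp : ∀ i, z - p i ≠ 0 := by
    intro i h
    have hzi : z = p i := sub_eq_zero.mp h
    have := hpr i
    rw [← hzi, hz] at this
    linarith
  have hzq : z - q ≠ 0 := by
    intro h
    have hzi : z = q := sub_eq_zero.mp h
    rw [hzi] at hz
    linarith
  rw [partial_fractions m hm p hp z hzp]
  set P : ℂ := ∏ i, (z - p i) with hPdef
  set Q : ℂ := (z - q) ^ m with hQdef
  have hPne : P ≠ 0 := Finset.prod_ne_zero_iff.mpr fun i _ => hzp i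
  have hQne : Q ≠ 0 := pow_ne_zero _ hzq
  have key : P⁻¹ - 1 / Q = (Q - P) / (P * Q) := by field_simp
  rw [key, norm_div, norm_mul]
  -- lower bounds on denominators
  have hsub : ∀ i, 1 - r ≤ ‖z - p i‖ := by
    intro i
    have h1 : ‖z‖ - ‖p i‖ ≤ ‖z - p i‖ := norm_sub_norm_le z (p i)
    have := hpr i
    linarith
  have hPlb : (1 - r) ^ m ≤ ‖P‖ := by
    rw [hPdef, norm_prod]
    calc (1 - r) ^ m = ∏ _i : Fin m, (1 - r) := by
          rw [Finset.prod_const, Finset.card_univ, Fintype.card_fin]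
      _ ≤ ∏ i, ‖z - p i‖ :=
          Finset.prod_le_prod (fun _ _ => by linarith) (fun i _ => hsub i)
  have hzqlb : 1 - ‖q‖ ≤ ‖z - q‖ := by
    have h1 : ‖z‖ - ‖q‖ ≤ ‖z - q‖ := norm_sub_norm_le z q
    linarith
  have hQlb : (1 - ‖q‖) ^ m ≤ ‖Q‖ := by
    rw [hQdef, norm_pow]
    exact pow_le_pow_left₀ (by linarith) hzqlb m
  -- numerator bound
  set g : ℕ → ℂ := fun k => if h : k < m then z - p ⟨k, h⟩ else 1 with hgdef
  have hQP : Q - P = ∏ _i ∈ range m, (z - q) - ∏ i ∈ range m, g i := by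
    congr 1
    · rw [Finset.prod_const, Finset.card_range]
    · rw [hPdef, ← Fin.prod_univ_eq_prod_range g m]
      exact Finset.prod_congr rfl fun i _ => by simp [hgdef, i.isLt]
  have htele : ‖Q - P‖ ≤ d * ∑ k ∈ range m, A ^ k * B ^ (m - 1 - k) := by
    rw [hQP]
    refine tele_bound m (fun _ => z - q) g A B d (by positivity) (by positivity) hd0
      (fun i _ => ?_) (fun i hi => ?_) (fun i hi => ?_)
    · have := norm_sub_le z q
      rw [hz] at this
      rw [hA]; linarith
    · simp only [hgdef, dif_pos hi]
      have h1 : ‖z - p ⟨i, hi⟩‖ ≤ ‖z‖ + ‖p ⟨i, hi⟩‖ :=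
        norm_sub_le _ _
      have := hpr ⟨i, hi⟩
      rw [hz] at h1
      rw [hB]; linarith
    · simp only [hgdef, dif_pos hi]
      have h1 : (z - q) - (z - p ⟨i, hi⟩) = p ⟨i, hi⟩ - q := by ring
      rw [h1]
      exact hd.2 ⟨⟨i, hi⟩, rfl⟩
  have hSeq : ∑ k ∈ range m, A ^ k * B ^ (m - 1 - k) = B ^ m - A ^ m := by
    have hgs := geom_sum₂_mul A B m
    have hAB : A - B = -1 := by rw [hA, hB]; ring
    rw [hAB] at hgs
    linarith
  rw [hSeq] at htele
  have hdenpos : (0:ℝ) < (1 - r) ^ m * (1 - ‖q‖) ^ m :=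
    mul_pos (pow_pos (by linarith) m) (pow_pos (by linarith) m)
  have hABm : A ^ m ≤ B ^ m :=
    pow_le_pow_left₀ (by rw [hA]; positivity) (by rw [hA, hB]; linarith) m
  calc ‖Q - P‖ / (‖P‖ * ‖Q‖)
      ≤ (d * (B ^ m - A ^ m)) / ((1 - r) ^ m * (1 - ‖q‖) ^ m) := by
        apply div_le_div₀ (mul_nonneg hd0 (by linarith [hABm])) htele hdenpos
        exact mul_le_mul hPlb hQlb (pow_nonneg (by linarith) m) (norm_nonneg _)
    _ = (B ^ m - A ^ m) / ((1 - ‖q‖) ^ m * (1 - r) ^ m) * d := by ring
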